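/- Let G be a 3×3 real matrix with nonnegative entries whose columns each sum to 1, and for each integer n with −2 ≤ n ≤ 2 define the 3×3 complex matrix K_n by (K_n)_{ij} = √(G_{ij}) if i − j = n and 0 otherwise. Let ρ₀ = |ψ₀⟩⟨ψ₀| where ψ₀ = (1/√2)(e₀ + e₁) ∈ ℂ³, and let ρ = Σ_{n=−2}^{2} K_n ρ₀ K_n†. Then the diagonal of ρ equals G·(1/2, 1/2, 0)ᵀ, the (1,0) entry of ρ equals (1/2)√(G₀₀ G₁₁), the (2,1) entry of ρ equals (1/2)√(G₁₀ G₂₁), and the (2,0) entry of ρ equals 0. -/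

import Mathlib

open Matrix

/-- The Kraus operators built from a transition matrix `G`: `K n` is supported
on the `n`-th diagonal, with entries `√(G i j)` for `i − j = n`. -/
noncomputable def kraus (G : Matrix (Fin 3) (Fin 3) ℝ) (n : ℤ) :
    Matrix (Fin 3) (Fin 3) ℂ :=
  fun i j => if ((i : ℕ) : ℤ) - ((j : ℕ) : ℤ) = n then (Real.sqrt (G i j) : ℂ) else 0

/-- The channel built from a column-stochastic matrix `G`, applied to the input
state `ρ₀ = |ψ₀⟩⟨ψ₀|` with `ψ₀ = (e₀ + e₁)/√2`, produces the output populations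
`G·(1/2,1/2,0)ᵀ` and the output coherences `ρ₁₀ = (1/2)√(G₀₀G₁₁)`,
`ρ₂₁ = (1/2)√(G₁₀G₂₁)`, `ρ₂₀ = 0`. -/
theorem kraus_channel_output_state
    (G : Matrix (Fin 3) (Fin 3) ℝ)
    (hGnn : ∀ i j, 0 ≤ G i j) (hGcol : ∀ j, ∑ i, G i j = 1)
    (ρ₀ : Matrix (Fin 3) (Fin 3) ℂ)
    (hρ₀ : ρ₀ = Matrix.vecMulVec
      ![(1 / Real.sqrt 2 : ℂ), (1 / Real.sqrt 2 : ℂ), 0]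
      (star ![(1 / Real.sqrt 2 : ℂ), (1 / Real.sqrt 2 : ℂ), 0]))
    (ρ : Matrix (Fin 3) (Fin 3) ℂ)
    (hρ : ρ = ∑ n ∈ Finset.Icc (-2 : ℤ) 2, kraus G n * ρ₀ * (kraus G n)ᴴ) :
    (∀ i, ρ i i = ((G.mulVec ![1 / 2, 1 / 2, 0] i : ℝ) : ℂ)) ∧
    ρ 1 0 = ((Real.sqrt (G 0 0 * G 1 1) / 2 : ℝ) : ℂ) ∧
    ρ 2 1 = ((Real.sqrt (G 1 0 * G 2 1) / 2 : ℝ) : ℂ) ∧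
    ρ 2 0 = 0 := by
  subst hρ₀ hρ
  have hIcc : Finset.Icc (-2:ℤ) 2 = ({-2,-1,0,1,2} : Finset ℤ) := by decide
  have h2 : ((Real.sqrt 2 : ℝ):ℂ)⁻¹ * ((Real.sqrt 2:ℝ):ℂ)⁻¹ = ((1/2:ℝ):ℂ) := by
    rw [← Complex.ofReal_inv, ← Complex.ofReal_mul, ← mul_inv,
      Real.mul_self_sqrt (by norm_num : (0:ℝ) ≤ 2)]
    norm_num
  refine ⟨?_, ?_, ?_, ?_⟩
  · intro i
    have sq : ∀ i j : Fin 3,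
        ((Real.sqrt (G i j) : ℝ):ℂ) * ((Real.sqrt (G i j):ℝ):ℂ) = ((G i j : ℝ):ℂ) :=
      fun i j => by rw [← Complex.ofReal_mul, Real.mul_self_sqrt (hGnn i j)]
    fin_cases i <;>
    · simp [hIcc, Matrix.sum_apply, Matrix.mul_apply, kraus, Fin.sum_univ_three,
        Matrix.vecMulVec_apply, Matrix.conjTranspose_apply, Pi.star_apply, h2,
        Matrix.mulVec, dotProduct, -Matrix.cons_vecMulVec]
      rw [mul_right_comm, sq, mul_right_comm, sq]
      ring
  · simp [hIcc, Matrix.sum_apply, Matrix.mul_apply, kraus, Fin.sum_univ_three,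
      Matrix.vecMulVec_apply, Matrix.conjTranspose_apply, Pi.star_apply, -Matrix.cons_vecMulVec]
    rw [h2, Real.sqrt_mul (hGnn 0 0)]
    push_cast
    ring
  · simp [hIcc, Matrix.sum_apply, Matrix.mul_apply, kraus, Fin.sum_univ_three,
      Matrix.vecMulVec_apply, Matrix.conjTranspose_apply, Pi.star_apply, -Matrix.cons_vecMulVec]
    rw [h2, Real.sqrt_mul (hGnn 1 0)]
    push_cast
    ring
  · simp [hIcc, Matrix.sum_apply, Matrix.mul_apply, kraus, Fin.sum_univ_three,
      Matrix.vecMulVec_apply, Matrix.conjTranspose_apply, Pi.star_apply, -Matrix.cons_vecMulVec]
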